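/- Let a₁, a₂, a₃ ∈ (0,1) and let A₃ = [[a₁, 1, 0], [0, a₂, 1], [1, 0, a₃]]. Then the symmetric game with payoff matrix A₃ has exactly one symmetric Nash equilibrium x in the standard simplex of ℝ³, and this x has all three coordinates strictly positive. -/

import Mathlib

/-- `x` is a symmetric Nash equilibrium of the symmetric game with payoff matrix `A`:
`x` lies in the standard simplex of `ℝ³` and `xᵀAx ≥ yᵀAx` for all `y` in the simplex. -/
def IsSymNash (A : Matrix (Fin 3) (Fin 3) ℝ) (x : Fin 3 → ℝ) : Prop :=
  (∀ j, 0 ≤ x j) ∧ (∑ j, x j = 1) ∧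
    ∀ y : Fin 3 → ℝ, (∀ j, 0 ≤ y j) → (∑ j, y j = 1) →
      dotProduct y (A.mulVec x) ≤ dotProduct x (A.mulVec x)

set_option maxHeartbeats 1000000 in
lemma classA3_aux (a₁ a₂ a₃ u v t w : ℝ)
    (ha1 : 0 < a₁) (hb1 : a₁ < 1) (ha2 : 0 < a₂) (hb2 : a₂ < 1) (ha3 : 0 < a₃) (hb3 : a₃ < 1)
    (h0 : 0 ≤ u) (h1 : 0 ≤ v) (h2 : 0 ≤ t) (hsum : u + v + t = 1)
    (hw : w = u * (a₁ * u + v) + v * (a₂ * v + t) + t * (u + a₃ * t))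
    (hle0 : a₁ * u + v ≤ w) (hle1 : a₂ * v + t ≤ w) (hle2 : u + a₃ * t ≤ w) :
    a₁ * u + v = w ∧ a₂ * v + t = w ∧ u + a₃ * t = w := by
  have key : u * (w - (a₁ * u + v)) + v * (w - (a₂ * v + t)) + t * (w - (u + a₃ * t)) = 0 := by
    linear_combination w * hsum + hw
  have hp0 : 0 < u := by
    rcases h0.lt_or_eq with h | h; · exact h
    exfalso
    replace h := h.symm; subst h
    rcases h1.lt_or_eq with hh1 | hh1
    · rcases h2.lt_or_eq with hh2 | hh2
      · have A1 : 0 ≤ v * (w - (a₂ * v + t)) := mul_nonneg h1 (by linarith)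
        have A2 : 0 ≤ t * (w - ((0:ℝ) + a₃ * t)) := mul_nonneg h2 (by linarith)
        have Z1 : v * (w - (a₂ * v + t)) = 0 := by nlinarith [key]
        have Z2 : t * (w - ((0:ℝ) + a₃ * t)) = 0 := by nlinarith [key]
        have e1 : w = a₂ * v + t := by
          rcases mul_eq_zero.1 Z1 with hc | hc
          · exact absurd hc (ne_of_gt hh1)
          · linarith
        have e2 : w = (0:ℝ) + a₃ * t := by
          rcases mul_eq_zero.1 Z2 with hc | hc
          · exact absurd hc (ne_of_gt hh2)
          · linarith
        nlinarith [mul_pos ha2 hh1, mul_pos (show (0:ℝ) < 1 - a₃ by linarith) hh2]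
      · replace hh2 := hh2.symm; subst hh2
        have hv : v = 1 := by linarith
        subst hv
        nlinarith [hw, hle0]
    · replace hh1 := hh1.symm; subst hh1
      have ht : t = 1 := by linarith
      subst ht
      nlinarith [hw, hle1]
  have hp1 : 0 < v := by
    rcases h1.lt_or_eq with h | h; · exact h
    exfalso
    replace h := h.symm; subst h
    have A1 : 0 ≤ u * (w - (a₁ * u + (0:ℝ))) := mul_nonneg h0 (by linarith)
    have A2 : 0 ≤ t * (w - (u + a₃ * t)) := mul_nonneg h2 (by linarith)
    have Z1 : u * (w - (a₁ * u + (0:ℝ))) = 0 := by nlinarith [key]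
    have e1 : w = a₁ * u + 0 := by
      rcases mul_eq_zero.1 Z1 with hc | hc
      · exact absurd hc (ne_of_gt hp0)
      · linarith
    nlinarith [hle2, mul_pos (show (0:ℝ) < 1 - a₁ by linarith) hp0, mul_nonneg ha3.le h2]
  have hp2 : 0 < t := by
    rcases h2.lt_or_eq with h | h; · exact h
    exfalso
    replace h := h.symm; subst h
    have A1 : 0 ≤ u * (w - (a₁ * u + v)) := mul_nonneg h0 (by linarith)
    have A2 : 0 ≤ v * (w - (a₂ * v + (0:ℝ))) := mul_nonneg h1 (by linarith)
    have Z1 : u * (w - (a₁ * u + v)) = 0 := by nlinarith [key]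
    have Z2 : v * (w - (a₂ * v + (0:ℝ))) = 0 := by nlinarith [key]
    have e1 : w = a₁ * u + v := by
      rcases mul_eq_zero.1 Z1 with hc | hc
      · exact absurd hc (ne_of_gt hp0)
      · linarith
    have e2 : w = a₂ * v + 0 := by
      rcases mul_eq_zero.1 Z2 with hc | hc
      · exact absurd hc (ne_of_gt hp1)
      · linarith
    nlinarith [mul_pos ha1 hp0, mul_pos (show (0:ℝ) < 1 - a₂ by linarith) hp1]
  have A0 : 0 ≤ u * (w - (a₁ * u + v)) := mul_nonneg h0 (by linarith)
  have A1 : 0 ≤ v * (w - (a₂ * v + t)) := mul_nonneg h1 (by linarith)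
  have A2 : 0 ≤ t * (w - (u + a₃ * t)) := mul_nonneg h2 (by linarith)
  have Z0 : u * (w - (a₁ * u + v)) = 0 := by linarith
  have Z1 : v * (w - (a₂ * v + t)) = 0 := by linarith
  have Z2 : t * (w - (u + a₃ * t)) = 0 := by linarith
  refine ⟨?_, ?_, ?_⟩
  · rcases mul_eq_zero.1 Z0 with hc | hc
    · exact absurd hc (ne_of_gt hp0)
    · linarith
  · rcases mul_eq_zero.1 Z1 with hc | hc
    · exact absurd hc (ne_of_gt hp1)
    · linarith
  · rcases mul_eq_zero.1 Z2 with hc | hc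
    · exact absurd hc (ne_of_gt hp2)
    · linarith

/-- The symmetric game with the given payoff matrix has exactly one symmetric Nash
equilibrium, and it is completely mixed. -/
theorem classA3_unique_completely_mixed (a₁ a₂ a₃ : ℝ)
    (h₁ : a₁ ∈ Set.Ioo (0:ℝ) 1) (h₂ : a₂ ∈ Set.Ioo (0:ℝ) 1) (h₃ : a₃ ∈ Set.Ioo (0:ℝ) 1) :
    ∃ x : Fin 3 → ℝ, IsSymNash !![a₁, 1, 0; 0, a₂, 1; 1, 0, a₃] x ∧ (∀ j, 0 < x j) ∧
      ∀ y : Fin 3 → ℝ, IsSymNash !![a₁, 1, 0; 0, a₂, 1; 1, 0, a₃] y → y = x := by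
  obtain ⟨ha1, hb1⟩ := h₁
  obtain ⟨ha2, hb2⟩ := h₂
  obtain ⟨ha3, hb3⟩ := h₃
  set D : ℝ := 3 - a₁ - a₂ - a₃ + a₁*a₂ + a₁*a₃ + a₂*a₃ with hDdef
  have hN1 : (0:ℝ) < 1 - a₃ + a₂*a₃ := by nlinarith
  have hN2 : (0:ℝ) < 1 - a₁ + a₁*a₃ := by nlinarith
  have hN3 : (0:ℝ) < 1 - a₂ + a₁*a₂ := by nlinarith
  have hD : (0:ℝ) < D := by rw [hDdef]; nlinarith
  have hD' : D ≠ 0 := ne_of_gt hD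
  set A : Matrix (Fin 3) (Fin 3) ℝ := !![a₁, 1, 0; 0, a₂, 1; 1, 0, a₃] with hA
  set x : Fin 3 → ℝ := ![(1 - a₃ + a₂*a₃)/D, (1 - a₁ + a₁*a₃)/D, (1 - a₂ + a₁*a₂)/D] with hx
  have hAx : ∀ j, (A.mulVec x) j = (1 + a₁*a₂*a₃)/D := by
    intro j
    fin_cases j <;>
      · simp [hA, hx, Matrix.mulVec, dotProduct, Fin.sum_univ_three]
        field_simp
        ring
  have hxsum : ∑ j, x j = 1 := by
    simp only [hx, Fin.sum_univ_three, Matrix.cons_val_zero, Matrix.cons_val_one,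
      Matrix.head_cons, Matrix.cons_val_two, Matrix.tail_cons]
    field_simp
    ring
  have hxpos : ∀ j, 0 < x j := by
    intro j
    fin_cases j
    · simpa [hx] using div_pos hN1 hD
    · simpa [hx] using div_pos hN2 hD
    · simpa [hx] using div_pos hN3 hD
  refine ⟨x, ⟨fun j => (hxpos j).le, hxsum, ?_⟩, hxpos, ?_⟩
  · intro y hy hysum
    have hysum3 : y 0 + y 1 + y 2 = 1 := by simpa [Fin.sum_univ_three] using hysum
    have hxsum3 : x 0 + x 1 + x 2 = 1 := by simpa [Fin.sum_univ_three] using hxsum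
    have h1 : dotProduct y (A.mulVec x) = (1 + a₁*a₂*a₃)/D := by
      simp only [dotProduct, Fin.sum_univ_three, hAx]
      linear_combination ((1 + a₁*a₂*a₃)/D) * hysum3
    have h2 : dotProduct x (A.mulVec x) = (1 + a₁*a₂*a₃)/D := by
      simp only [dotProduct, Fin.sum_univ_three, hAx]
      linear_combination ((1 + a₁*a₂*a₃)/D) * hxsum3
    rw [h1, h2]
  · rintro y ⟨hy0, hysum, hyN⟩
    have hsum3 : y 0 + y 1 + y 2 = 1 := by simpa [Fin.sum_univ_three] using hysum
    have hm0 : (A.mulVec y) 0 = a₁ * y 0 + y 1 := by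
      simp [hA, Matrix.mulVec, dotProduct, Fin.sum_univ_three]
    have hm1 : (A.mulVec y) 1 = a₂ * y 1 + y 2 := by
      simp [hA, Matrix.mulVec, dotProduct, Fin.sum_univ_three]
    have hm2 : (A.mulVec y) 2 = y 0 + a₃ * y 2 := by
      simp [hA, Matrix.mulVec, dotProduct, Fin.sum_univ_three]
    have hwval : dotProduct y (A.mulVec y)
        = y 0 * (a₁ * y 0 + y 1) + y 1 * (a₂ * y 1 + y 2) + y 2 * (y 0 + a₃ * y 2) := by
      simp only [dotProduct, Fin.sum_univ_three, hm0, hm1, hm2]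
    have hle0 : a₁ * y 0 + y 1 ≤ dotProduct y (A.mulVec y) := by
      have := hyN ![1,0,0] (by intro i; fin_cases i <;> norm_num) (by simp [Fin.sum_univ_three])
      simpa [dotProduct, Fin.sum_univ_three, hm0] using this
    have hle1 : a₂ * y 1 + y 2 ≤ dotProduct y (A.mulVec y) := by
      have := hyN ![0,1,0] (by intro i; fin_cases i <;> norm_num) (by simp [Fin.sum_univ_three])
      simpa [dotProduct, Fin.sum_univ_three, hm1] using this
    have hle2 : y 0 + a₃ * y 2 ≤ dotProduct y (A.mulVec y) := by
      have := hyN ![0,0,1] (by intro i; fin_cases i <;> norm_num) (by simp [Fin.sum_univ_three])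
      simpa [dotProduct, Fin.sum_univ_three, hm2] using this
    obtain ⟨he0, he1, he2⟩ := classA3_aux a₁ a₂ a₃ (y 0) (y 1) (y 2)
      (dotProduct y (A.mulVec y)) ha1 hb1 ha2 hb2 ha3 hb3
      (hy0 0) (hy0 1) (hy0 2) hsum3 hwval hle0 hle1 hle2
    funext j
    fin_cases j
    · show y 0 = x 0
      rw [hx]
      show y 0 = (1 - a₃ + a₂*a₃)/D
      rw [eq_div_iff hD']
      linear_combination (a₂ + a₃ - 1) * (he0 - he2) - (1 + a₃) * (he1 - he2)
        + (1 - a₃ + a₂*a₃) * hsum3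
    · show y 1 = x 1
      rw [hx]
      show y 1 = (1 - a₁ + a₁*a₃)/D
      rw [eq_div_iff hD']
      linear_combination (2 - a₃) * (he0 - he2) + (a₁ + a₃ - 1) * (he1 - he2)
        + (1 - a₁ + a₁*a₃) * hsum3
    · show y 2 = x 2
      rw [hx]
      show y 2 = (1 - a₂ + a₁*a₂)/D
      rw [eq_div_iff hD']
      linear_combination (-(1 + a₂)) * (he0 - he2) + (2 - a₁) * (he1 - he2)
        + (1 - a₂ + a₁*a₂) * hsum3
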